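/- Let f : ℝ → ℝ be integrable and c ∈ ℝ. Then ∫₀^1 f(⌊c - r⌋ + r) dr = ∫_{c-1}^{c} f(y) dy, where ⌊·⌋ denotes the floor function. -/
import Mathlib


open MeasureTheory Real

/-- ∫₀^1 f(⌊c - r⌋ + r) dr = ∫_{c-1}^{c} f(y) dy. -/
theorem floor_change_of_variables (f : ℝ → ℝ) (hf : MeasureTheory.Integrable f) (c : ℝ) :
    ∫ r in (0:ℝ)..1, f (↑⌊c - r⌋ + r) = ∫ y in (c-1)..c, f y := by
  set m : ℤ := ⌊c⌋ with hm
  set θ : ℝ := Int.fract c with hθ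
  have hθeq : θ = c - m := rfl
  have hθ0 : 0 ≤ θ := Int.fract_nonneg c
  have hθ1 : θ < 1 := Int.fract_lt_one c
  -- floor values on the two pieces
  have hfl1 : ∀ r ∈ Set.Icc (0:ℝ) θ, (⌊c - r⌋ : ℝ) = (m : ℝ) := by
    intro r hr
    have : ⌊c - r⌋ = m := by
      rw [Int.floor_eq_iff]
      constructor
      · linarith [hr.2, hθeq]
      · have : (m : ℝ) ≤ c := Int.floor_le c
        have : c < m + 1 := Int.lt_floor_add_one c
        linarith [hr.1]
    exact_mod_cast congrArg (fun z : ℤ => (z : ℝ)) this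
  have hfl2 : ∀ r ∈ Set.Ioc θ (1:ℝ), (⌊c - r⌋ : ℝ) = ((m : ℝ) - 1) := by
    intro r hr
    have : ⌊c - r⌋ = m - 1 := by
      rw [Int.floor_eq_iff]
      push_cast
      constructor
      · linarith [hr.2, hθeq]
      · linarith [hr.1, hθeq]
    rw [this]; push_cast; ring
  -- integrability of the composed function on each piece
  have hg1 : IntervalIntegrable (fun r => f (↑⌊c - r⌋ + r)) volume 0 θ := by
    rw [intervalIntegrable_iff_integrableOn_Ioc_of_le hθ0]
    apply (hf.comp_add_left (m : ℝ)).integrableOn.congr_fun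
    · intro r hr
      show f ((m:ℝ) + r) = f (↑⌊c - r⌋ + r)
      rw [hfl1 r (Set.Ioc_subset_Icc_self hr)]
    · exact measurableSet_Ioc
  have hg2 : IntervalIntegrable (fun r => f (↑⌊c - r⌋ + r)) volume θ 1 := by
    rw [intervalIntegrable_iff_integrableOn_Ioc_of_le hθ1.le]
    apply (hf.comp_add_left ((m : ℝ) - 1)).integrableOn.congr_fun
    · intro r hr
      show f ((m:ℝ) - 1 + r) = f (↑⌊c - r⌋ + r)
      rw [hfl2 r hr]
    · exact measurableSet_Ioc
  -- split
  rw [← intervalIntegral.integral_add_adjacent_intervals hg1 hg2]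
  have h1 : ∫ r in (0:ℝ)..θ, f (↑⌊c - r⌋ + r) = ∫ y in (m:ℝ)..c, f y := by
    rw [intervalIntegral.integral_congr (g := fun r => f (r + m))
      (by intro r hr
          rw [Set.uIcc_of_le hθ0] at hr
          simp only [hfl1 r hr, add_comm])]
    rw [intervalIntegral.integral_comp_add_right]
    norm_num
    rw [hθeq]; ring_nf
  have h2 : ∫ r in θ..(1:ℝ), f (↑⌊c - r⌋ + r) = ∫ y in (c-1)..(m:ℝ), f y := by
    rw [intervalIntegral.integral_congr_ae (g := fun r => f (r + ((m:ℝ) - 1)))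
      (Filter.Eventually.of_forall (fun r hr => by
          rw [Set.uIoc_of_le hθ1.le] at hr
          simp only [hfl2 r hr, add_comm]))]
    rw [intervalIntegral.integral_comp_add_right]
    have e1 : θ + ((m:ℝ) - 1) = c - 1 := by rw [hθeq]; ring
    have e2 : (1:ℝ) + ((m:ℝ) - 1) = m := by ring
    rw [e1, e2]
  rw [h1, h2]
  rw [add_comm, intervalIntegral.integral_add_adjacent_intervals
    hf.intervalIntegrable hf.intervalIntegrable]
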